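/- Let G ∈ ℚ⟦x, u⟧ be a bivariate formal power series satisfying G = 1 + x G² (1 − u + uG) (this equation has a unique power-series solution, with constant coefficient 1). Then for every n ≥ 1 and every k ≥ 0, the coefficient of x^n u^k in G equals (1/n) · C(n, k) · C(2n, n − 1 − k). -/

import Mathlib

noncomputable section

open PowerSeries Finset Polynomial

abbrev QQ := PowerSeries ℚ

instance : CharZero QQ :=
  ⟨fun a b h => by
    have h2 := congrArg (PowerSeries.constantCoeff (R := ℚ)) h
    simpa using h2⟩

/-- Swap the two variables of an element of `ℚ⟦x⟧⟦u⟧`. -/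
def swapFun (F : PowerSeries QQ) : PowerSeries QQ :=
  PowerSeries.mk fun n => PowerSeries.mk fun k =>
    PowerSeries.coeff (R := ℚ) n (PowerSeries.coeff (R := QQ) k F)

lemma swapFun_coeff (F : PowerSeries QQ) (n k : ℕ) :
    PowerSeries.coeff (R := ℚ) k (PowerSeries.coeff (R := QQ) n (swapFun F)) =
      PowerSeries.coeff (R := ℚ) n (PowerSeries.coeff (R := QQ) k F) := by
  simp [swapFun]

/-- Swapping the variables is a ring homomorphism. -/
def swapHom : PowerSeries QQ →+* PowerSeries QQ where
  toFun := swapFun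
  map_one' := by
    ext n k
    simp [swapFun_coeff, PowerSeries.coeff_one, apply_ite (PowerSeries.coeff (R := ℚ) k),
      apply_ite (PowerSeries.coeff (R := ℚ) n)]
    by_cases h : n = 0 <;> by_cases h' : k = 0 <;> simp [h, h', PowerSeries.coeff_one]
  map_mul' := by
    intro F G'
    ext n k
    simp only [swapFun_coeff, PowerSeries.coeff_mul, map_sum]
    rw [Finset.sum_comm]
  map_zero' := by
    ext n k
    simp [swapFun_coeff]
  map_add' := by
    intro F G'
    ext n k
    simp [swapFun_coeff]

lemma swapHom_coeff (F : PowerSeries QQ) (n k : ℕ) :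
    PowerSeries.coeff (R := ℚ) k (PowerSeries.coeff (R := QQ) n (swapHom F)) =
      PowerSeries.coeff (R := ℚ) n (PowerSeries.coeff (R := QQ) k F) :=
  swapFun_coeff F n k

lemma swapHom_CX :
    swapHom (PowerSeries.C (R := QQ) (PowerSeries.X : QQ)) = (PowerSeries.X : PowerSeries QQ) := by
  ext n k
  simp only [swapHom, RingHom.coe_mk, MonoidHom.coe_mk, OneHom.coe_mk, swapFun_coeff]
  simp [PowerSeries.coeff_X, PowerSeries.coeff_C, apply_ite (PowerSeries.coeff (R := ℚ) n),
    apply_ite (PowerSeries.coeff (R := ℚ) k)]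
  by_cases h : n = 1 <;> by_cases h' : k = 0 <;> simp [h, h', PowerSeries.coeff_one]

lemma swapHom_X :
    swapHom (PowerSeries.X : PowerSeries QQ) = PowerSeries.C (R := QQ) (PowerSeries.X : QQ) := by
  ext n k
  simp only [swapHom, RingHom.coe_mk, MonoidHom.coe_mk, OneHom.coe_mk, swapFun_coeff]
  simp [PowerSeries.coeff_X, PowerSeries.coeff_C, apply_ite (PowerSeries.coeff (R := ℚ) n),
    apply_ite (PowerSeries.coeff (R := ℚ) k)]
  by_cases h : n = 0 <;> by_cases h' : k = 1 <;> simp [h, h', PowerSeries.coeff_one]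

/-- Lagrange inversion (Lagrange–Bürmann, polynomial case): if `H = X · φ(H)` for a
polynomial `φ`, then `n · [xⁿ] Hᵐ = m · [w^{n-m}] φ(w)ⁿ`. -/
lemma lagrange_aux {R : Type*} [CommRing R] [IsDomain R] [CharZero R]
    (φ : Polynomial R) (H : PowerSeries R)
    (hH : H = PowerSeries.X * Polynomial.eval₂ (PowerSeries.C (R := R)) H φ) (n : ℕ) :
    ∀ m : ℕ, 1 ≤ m → m ≤ n →
      (n : R) * PowerSeries.coeff (R := R) n (H ^ m) = (m : R) * (φ ^ n).coeff (n - m) := by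
  have h0 : PowerSeries.constantCoeff (R := R) H = 0 := by rw [hH]; simp
  have hHp : ∀ j : ℕ, H ^ j = Polynomial.eval₂ (PowerSeries.C (R := R)) H (φ ^ j) * PowerSeries.X ^ j := by
    intro j
    conv_lhs => rw [hH]
    rw [mul_pow, Polynomial.eval₂_pow]
    ring
  have hcoeff : ∀ d j : ℕ, PowerSeries.coeff (R := R) d (H ^ j) =
      if j ≤ d then PowerSeries.coeff (R := R) (d - j) (Polynomial.eval₂ (PowerSeries.C (R := R)) H (φ ^ j)) else 0 := by
    intro d j
    rw [hHp j, PowerSeries.coeff_mul_X_pow']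
  have haeval : ∀ (ψ : Polynomial R) (M : ℕ), ψ.natDegree < M → ∀ N : ℕ,
      PowerSeries.coeff (R := R) N (Polynomial.eval₂ (PowerSeries.C (R := R)) H ψ) =
        ∑ j ∈ Finset.range M, ψ.coeff j * PowerSeries.coeff (R := R) N (H ^ j) := by
    intro ψ M hM N
    rw [Polynomial.eval₂_eq_sum_range' (PowerSeries.C (R := R)) hM H, map_sum]
    apply Finset.sum_congr rfl
    intro j _
    rw [PowerSeries.coeff_C_mul]
  induction n using Nat.strong_induction_on with
  | _ n IH =>
  intro m hm1 hmn
  rcases eq_or_lt_of_le hmn with heq | hlt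
  · -- case m = n
    subst heq
    rw [Nat.sub_self]
    congr 1
    rw [hcoeff, if_pos le_rfl, Nat.sub_self,
      haeval (φ ^ m) ((φ ^ m).natDegree + 1) (Nat.lt_succ_self _) 0,
      Finset.sum_eq_single 0]
    · simp
    · intro j _ hj
      rw [PowerSeries.coeff_zero_eq_constantCoeff, map_pow, h0, zero_pow hj, mul_zero]
    · simp
  · -- case m < n
    set N := n - m with hN
    have hN1 : 1 ≤ N := by omega
    have hNn : N < n := by omega
    set ψ := φ ^ m with hψ
    set M := ψ.natDegree + N + 2 with hM
    have hdM : ψ.natDegree < M := by omega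
    have step1 : PowerSeries.coeff (R := R) n (H ^ m) =
        PowerSeries.coeff (R := R) N (Polynomial.eval₂ (PowerSeries.C (R := R)) H ψ) := by
      rw [hcoeff, if_pos (le_of_lt hlt)]
    have step4 : (N : R) * PowerSeries.coeff (R := R) N (Polynomial.eval₂ (PowerSeries.C (R := R)) H ψ) =
        (ψ.derivative * φ ^ N).coeff (N - 1) := by
      rw [haeval ψ M hdM N, Finset.mul_sum]
      have hterm : ∀ j ∈ Finset.range M,
          (N : R) * (ψ.coeff j * PowerSeries.coeff (R := R) N (H ^ j)) =
          if j ∈ Finset.Ico 1 (N + 1) then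
            ψ.coeff j * ((j : R) * (φ ^ N).coeff (N - j)) else 0 := by
        intro j _
        rcases Nat.eq_zero_or_pos j with hj0 | hj1
        · subst hj0
          rw [if_neg (by simp)]
          rw [pow_zero, PowerSeries.coeff_one, if_neg (by omega)]
          ring
        · by_cases hjN : j ≤ N
          · rw [if_pos (by simp only [Finset.mem_Ico]; omega)]
            have h := IH N hNn j hj1 hjN
            calc (N : R) * (ψ.coeff j * PowerSeries.coeff (R := R) N (H ^ j))
                = ψ.coeff j * ((N : R) * PowerSeries.coeff (R := R) N (H ^ j)) := by ring
              _ = ψ.coeff j * ((j : R) * (φ ^ N).coeff (N - j)) := by rw [h]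
          · rw [if_neg (by simp only [Finset.mem_Ico]; omega)]
            rw [hcoeff, if_neg hjN]
            ring
      rw [Finset.sum_congr rfl hterm, Finset.sum_ite_mem,
        Finset.inter_eq_right.mpr (by intro x hx; simp at hx ⊢; omega),
        Polynomial.coeff_mul, Finset.Nat.sum_antidiagonal_eq_sum_range_succ_mk,
        show (N - 1).succ = N by omega, Finset.sum_Ico_eq_sum_range,
        show N + 1 - 1 = N from rfl]
      apply Finset.sum_congr rfl
      intro a _
      simp only [Polynomial.coeff_derivative]
      rw [show N - (1 + a) = N - 1 - a by omega]
      push_cast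
      ring
    have poly_id : (n : R) * (ψ.derivative * φ ^ N).coeff (N - 1) =
        (m : R) * ((N : R) * (φ ^ n).coeff N) := by
      have e1 : Polynomial.C (n : R) * (ψ.derivative * φ ^ N) =
          Polynomial.C (m : R) * Polynomial.derivative (φ ^ n) := by
        rw [hψ, Polynomial.derivative_pow, Polynomial.derivative_pow]
        have h2 : φ ^ (m - 1) * φ ^ N = φ ^ (n - 1) := by
          rw [← pow_add]; congr 1; omega
        calc Polynomial.C (n : R) * (Polynomial.C (m : R) * φ ^ (m - 1) *
              Polynomial.derivative φ * φ ^ N)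
            = Polynomial.C (m : R) * (Polynomial.C (n : R) * (φ ^ (m-1) * φ ^ N) *
              Polynomial.derivative φ) := by ring
          _ = _ := by rw [h2]
      have e2 := congrArg (fun p => Polynomial.coeff p (N - 1)) e1
      simp only [Polynomial.coeff_C_mul] at e2
      rw [e2, Polynomial.coeff_derivative, show N - 1 + 1 = N by omega,
        Nat.cast_sub hN1, Nat.cast_one]
      ring
    have hNne : (N : R) ≠ 0 := by
      exact Nat.cast_ne_zero.mpr (by omega : N ≠ 0)
    apply mul_left_cancel₀ hNne
    rw [step1]
    calc (N : R) * ((n : R) * PowerSeries.coeff (R := R) N (Polynomial.eval₂ (PowerSeries.C (R := R)) H ψ))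
        = (n : R) * ((N : R) * PowerSeries.coeff (R := R) N (Polynomial.eval₂ (PowerSeries.C (R := R)) H ψ)) := by ring
      _ = (n : R) * (ψ.derivative * φ ^ N).coeff (N - 1) := by rw [step4]
      _ = (m : R) * ((N : R) * (φ ^ n).coeff N) := poly_id
      _ = (N : R) * ((m : R) * (φ ^ n).coeff (n - m)) := by rw [← hN]; ring

lemma coeff_CuX_pow (n b : ℕ) :
    (((Polynomial.C (PowerSeries.X : QQ)) * Polynomial.X + 1 : Polynomial QQ) ^ n).coeff b =
      (n.choose b : QQ) * (PowerSeries.X : QQ) ^ b := by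
  rw [add_pow, Polynomial.finset_sum_coeff]
  have hterm : ∀ j, ((Polynomial.C (PowerSeries.X : QQ) * Polynomial.X) ^ j * 1 ^ (n - j) *
      (n.choose j : Polynomial QQ)).coeff b =
      if b = j then (n.choose j : QQ) * (PowerSeries.X : QQ) ^ j else 0 := by
    intro j
    rw [one_pow, mul_one, mul_pow, ← Polynomial.C_pow, ← Polynomial.C_eq_natCast,
      Polynomial.coeff_mul_C, Polynomial.coeff_C_mul, Polynomial.coeff_X_pow]
    split <;> ring
  by_cases hb : b ≤ n
  · rw [Finset.sum_congr rfl (fun j _ => hterm j), Finset.sum_ite_eq (Finset.range (n + 1)) b,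
      if_pos (Finset.mem_range.mpr (by omega))]
  · rw [Finset.sum_eq_zero, Nat.choose_eq_zero_of_lt (by omega)]
    · simp
    · intro j hj
      simp only [Finset.mem_range] at hj
      rw [hterm j, if_neg (by omega)]

lemma coeff_phi_pow (n k : ℕ) (hn : 1 ≤ n) :
    PowerSeries.coeff (R := ℚ) k
      (((((Polynomial.X + 1) ^ 2 *
        (Polynomial.C (PowerSeries.X : QQ) * Polynomial.X + 1) : Polynomial QQ)) ^ n).coeff
        (n - 1)) =
      if k + 1 ≤ n then ((2 * n).choose (n - 1 - k) : ℚ) * (n.choose k : ℚ) else 0 := by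
  rw [mul_pow, ← pow_mul, Polynomial.coeff_mul]
  have hterm : ∀ p : ℕ × ℕ, p ∈ Finset.HasAntidiagonal.antidiagonal (n - 1) →
      PowerSeries.coeff (R := ℚ) k ((((Polynomial.X + 1 : Polynomial QQ)) ^ (2 * n)).coeff p.1 *
        (((Polynomial.C (PowerSeries.X : QQ)) * Polynomial.X + 1) ^ n).coeff p.2) =
      if p.2 = k then ((2 * n).choose p.1 : ℚ) * (n.choose p.2 : ℚ) else 0 := by
    intro p _
    rw [Polynomial.coeff_X_add_one_pow, coeff_CuX_pow]
    rw [show ((2 * n).choose p.1 : QQ) = PowerSeries.C (R := ℚ) ((2 * n).choose p.1 : ℚ) by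
      simp]
    rw [show ((n.choose p.2 : ℕ) : QQ) = PowerSeries.C (R := ℚ) (n.choose p.2 : ℚ) by
      simp]
    rw [← mul_assoc, ← map_mul, PowerSeries.coeff_C_mul, PowerSeries.coeff_X_pow]
    by_cases h : p.2 = k
    · rw [if_pos h.symm, if_pos h]; ring
    · rw [if_neg (fun hh => h hh.symm), if_neg h]; ring
  rw [map_sum, Finset.sum_congr rfl hterm]
  by_cases hk : k + 1 ≤ n
  · rw [Finset.sum_eq_single (n - 1 - k, k)]
    · rw [if_pos rfl, if_pos hk]
    · intro p hp hne
      rw [Finset.HasAntidiagonal.mem_antidiagonal] at hp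
      rw [if_neg]
      intro h2
      apply hne
      have h1 : p.1 = n - 1 - k := by omega
      exact Prod.ext h1 h2
    · intro h
      exact absurd (Finset.HasAntidiagonal.mem_antidiagonal.mpr (by omega)) h
  · rw [Finset.sum_eq_zero, if_neg hk]
    intro p hp
    rw [Finset.HasAntidiagonal.mem_antidiagonal] at hp
    rw [if_neg (by omega)]

/-- let `G ∈ ℚ⟦x,u⟧` (realized as `ℚ⟦x⟧⟦u⟧`, inner variable `x`, outer
variable `u`) satisfy `G = 1 + x G² (1 - u + uG)`. Then for `n ≥ 1` the coefficient of
`x^n u^k` in `G` equals `(1/n) C(n,k) C(2n, n-1-k)`, where the last binomial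
coefficient is interpreted as `0` when `k > n - 1`. -/
theorem ternary_trees_middle_edges
    (G : PowerSeries (PowerSeries ℚ))
    (hG : G = 1 + PowerSeries.C (PowerSeries.X : PowerSeries ℚ) * G ^ 2 *
        (1 - PowerSeries.X + PowerSeries.X * G))
    (n k : ℕ) (hn : 1 ≤ n) :
    PowerSeries.coeff n (PowerSeries.coeff k G) =
      (1 / n : ℚ) * (Nat.choose n k : ℚ) *
        (if k + 1 ≤ n then (Nat.choose (2 * n) (n - 1 - k) : ℚ) else 0) := by
  classical
  have h1 : swapHom G = 1 + PowerSeries.X * (swapHom G) ^ 2 *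
      (1 - PowerSeries.C (R := QQ) (PowerSeries.X : QQ) +
        PowerSeries.C (R := QQ) (PowerSeries.X : QQ) * swapHom G) := by
    have h := congrArg swapHom hG
    rw [map_add, map_one, map_mul, map_mul, map_pow, map_add, map_sub, map_one, map_mul,
      swapHom_CX, swapHom_X] at h
    exact h
  set H : PowerSeries QQ := swapHom G - 1 with hHdef
  have haev : Polynomial.eval₂ (PowerSeries.C (R := QQ)) H
      ((Polynomial.X + 1) ^ 2 *
        (Polynomial.C (PowerSeries.X : QQ) * Polynomial.X + 1) : Polynomial QQ) =
      (H + 1) ^ 2 * (PowerSeries.C (R := QQ) (PowerSeries.X : QQ) * H + 1) := by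
    rw [Polynomial.eval₂_mul, Polynomial.eval₂_pow, Polynomial.eval₂_add, Polynomial.eval₂_add,
      Polynomial.eval₂_mul, Polynomial.eval₂_X, Polynomial.eval₂_C, Polynomial.eval₂_one]
  have hH : H = PowerSeries.X * Polynomial.eval₂ (PowerSeries.C (R := QQ)) H
      ((Polynomial.X + 1) ^ 2 *
        (Polynomial.C (PowerSeries.X : QQ) * Polynomial.X + 1) : Polynomial QQ) := by
    rw [haev, hHdef]
    linear_combination h1
  have key := lagrange_aux _ H hH n 1 le_rfl hn
  rw [pow_one, Nat.cast_one, one_mul] at key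
  have hHn : PowerSeries.coeff (R := QQ) n H = PowerSeries.coeff (R := QQ) n (swapHom G) := by
    rw [hHdef, map_sub, PowerSeries.coeff_one, if_neg (by omega), sub_zero]
  rw [hHn] at key
  have key2 := congrArg (PowerSeries.coeff (R := ℚ) k) key
  rw [show ((n : ℕ) : QQ) = PowerSeries.C (R := ℚ) (n : ℚ) by simp,
    PowerSeries.coeff_C_mul, swapHom_coeff, coeff_phi_pow n k hn] at key2
  have hn0 : (n : ℚ) ≠ 0 := Nat.cast_ne_zero.mpr (by omega)
  by_cases hk : k + 1 ≤ n
  · rw [if_pos hk] at key2 ⊢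
    field_simp
    linear_combination key2
  · rw [if_neg hk] at key2 ⊢
    have hz : PowerSeries.coeff (R := ℚ) n (PowerSeries.coeff (R := QQ) k G) = 0 := by
      apply mul_left_cancel₀ hn0
      rw [key2, mul_zero]
    rw [hz, mul_zero]
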